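/- Monotonicity of the optimistic edit-distance loss (δ_o ≥ 0): Let C be a type with decidable equality, let t and y be lists over C, and let c ∈ C. Define f(y) = min over 0 ≤ k ≤ |t| of the Levenshtein distance (with unit insertion, deletion and substitution costs) between y and the prefix t.take k. Then f(y) ≤ f(y ++ [c]); that is, appending a character cannot decrease the optimistic task loss. -/

import Mathlib

structure Levenshtein.Cost (α β δ : Type*) where
  delete : α → δ
  insert : β → δ
  substitute : α → β → δ

def Levenshtein.defaultCost {α : Type*} [DecidableEq α] : Levenshtein.Cost α α ℕ where
  delete _ := 1
  insert _ := 1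
  substitute a b := if a = b then 0 else 1

def Levenshtein.impl {α β δ : Type*} [AddZeroClass δ] [Min δ] (C : Levenshtein.Cost α β δ)
    (xs : List α) (y : β) (d : {r : List δ // 0 < r.length}) : {r : List δ // 0 < r.length} :=
  let ⟨ds, w⟩ := d
  xs.zip (ds.zip ds.tail) |>.foldr
    (init := ⟨[ds.getLast (List.length_pos_iff.mp w) + C.insert y], by simp⟩)
    (fun ⟨x, d₀, d₁⟩ ⟨r, w⟩ =>
      ⟨min (C.delete x + r[0]) (min (C.insert y + d₀) (C.substitute x y + d₁)) :: r, by simp⟩)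

def suffixLevenshtein {α β δ : Type*} [AddZeroClass δ] [Min δ] (C : Levenshtein.Cost α β δ)
    (xs : List α) (ys : List β) : {r : List δ // 0 < r.length} :=
  ys.foldr
    (Levenshtein.impl C xs)
    (xs.foldr (init := ⟨[0], by simp⟩) (fun a ⟨r, w⟩ => ⟨(C.delete a + r[0]) :: r, by simp⟩))

def levenshtein {α β δ : Type*} [AddZeroClass δ] [Min δ] (C : Levenshtein.Cost α β δ)
    (xs : List α) (ys : List β) : δ :=
  let ⟨r, _⟩ := suffixLevenshtein C xs ys
  r[0]

namespace Levenshtein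

variable {α β δ : Type*} [AddZeroClass δ] [Min δ] (C : Levenshtein.Cost α β δ)

theorem impl_length' (xs : List α) (y : β) (d : {r : List δ // 0 < r.length})
    (w : d.1.length = xs.length + 1) :
    (impl C xs y d).1.length = xs.length + 1 := by
  induction xs generalizing d with
  | nil => rfl
  | cons x xs ih =>
    dsimp [impl]
    match d, w with
    | ⟨d₁ :: d₂ :: ds, _⟩, w =>
      dsimp
      congr 1
      exact ih ⟨d₂ :: ds, (by simp)⟩ (by simpa using w)

theorem suffixLevenshtein_length' (xs : List α) (ys : List β) :
    (suffixLevenshtein C xs ys).1.length = xs.length + 1 := by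
  induction ys with
  | nil =>
    dsimp [suffixLevenshtein]
    induction xs with
    | nil => rfl
    | cons _ xs ih => simp_all
  | cons y ys ih =>
    dsimp [suffixLevenshtein]
    rw [impl_length']
    exact ih

theorem impl_cons' (x : α) (xs : List α) (y : β) (d : δ) (ds : List δ) (w : 0 < (d :: ds).length)
    (w' : 0 < List.length ds) :
    impl C (x :: xs) y ⟨d :: ds, w⟩ =
      let ⟨r, w⟩ := impl C xs y ⟨ds, w'⟩
      ⟨min (C.delete x + r[0]) (min (C.insert y + d) (C.substitute x y + ds[0])) :: r, by simp⟩ :=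
  match ds, w' with | _ :: _, _ => rfl

theorem suffixLevenshtein_cons₁_aux' {x y : {r : List δ // 0 < r.length}}
    (w₀ : x.1[0]'x.2 = y.1[0]'y.2) (w : x.1.tail = y.1.tail) : x = y := by
  match x, y with
  | ⟨hx :: tx, _⟩, ⟨hy :: ty, _⟩ => simp_all

theorem suffixLevenshtein_cons₁' (x : α) (xs : List α) (ys : List β) :
    suffixLevenshtein C (x :: xs) ys =
      ⟨levenshtein C (x :: xs) ys :: (suffixLevenshtein C xs ys).1, by simp⟩ := by
  induction ys with
  | nil => rfl
  | cons y ys ih =>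
    apply suffixLevenshtein_cons₁_aux'
    · rfl
    · change (impl C (x :: xs) y (suffixLevenshtein C (x :: xs) ys)).1.tail = _
      rw [ih, impl_cons']
      · rfl
      · simp [suffixLevenshtein_length']

end Levenshtein

theorem levenshtein_cons_cons {α β δ : Type*} [AddZeroClass δ] [Min δ]
    (C : Levenshtein.Cost α β δ) (x : α) (xs : List α) (y : β) (ys : List β) :
    levenshtein C (x :: xs) (y :: ys) =
      min (C.delete x + levenshtein C xs (y :: ys))
        (min (C.insert y + levenshtein C (x :: xs) ys)
          (C.substitute x y + levenshtein C xs ys)) := by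
  have key : suffixLevenshtein C (x :: xs) (y :: ys) =
      Levenshtein.impl C (x :: xs) y
        ⟨levenshtein C (x :: xs) ys :: (suffixLevenshtein C xs ys).1, by simp⟩ := by
    change Levenshtein.impl C (x :: xs) y (suffixLevenshtein C (x :: xs) ys) = _
    rw [Levenshtein.suffixLevenshtein_cons₁']
  rw [Levenshtein.impl_cons' (w' := by simp [Levenshtein.suffixLevenshtein_length'])] at key
  have := congrArg (fun s : {r : List δ // 0 < r.length} => s.1[0]'s.2) key
  exact this

@[simp] theorem levenshtein_nil_nil {α β δ : Type*} [AddZeroClass δ] [Min δ]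
    (C : Levenshtein.Cost α β δ) : levenshtein C ([] : List α) ([] : List β) = 0 := rfl

@[simp] theorem levenshtein_cons_nil {α β δ : Type*} [AddZeroClass δ] [Min δ]
    (C : Levenshtein.Cost α β δ) (x : α) (xs : List α) :
    levenshtein C (x :: xs) ([] : List β) = C.delete x + levenshtein C xs [] := rfl

theorem suffixLevenshtein_nil_eq {α β δ : Type*} [AddZeroClass δ] [Min δ]
    (C : Levenshtein.Cost α β δ) (ys : List β) :
    suffixLevenshtein C ([] : List α) ys = ⟨[levenshtein C [] ys], by simp⟩ := by
  apply Subtype.ext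
  have h := Levenshtein.suffixLevenshtein_length' C ([] : List α) ys
  have e : levenshtein C ([] : List α) ys =
      (suffixLevenshtein C ([] : List α) ys).1[0]'(suffixLevenshtein C ([] : List α) ys).2 := rfl
  rw [e]
  generalize suffixLevenshtein C ([] : List α) ys = s at h ⊢
  obtain ⟨r, w⟩ := s
  rcases r with _ | ⟨a, _ | ⟨b, l⟩⟩ <;> simp at h ⊢

theorem levenshtein_nil_cons {α β δ : Type*} [AddZeroClass δ] [Min δ]
    (C : Levenshtein.Cost α β δ) (y : β) (ys : List β) :
    levenshtein C ([] : List α) (y :: ys) = levenshtein C [] ys + C.insert y := by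
  conv_lhs => unfold levenshtein
  change (Levenshtein.impl C [] y (suffixLevenshtein C [] ys)).1[0]'_ = _
  rw [suffixLevenshtein_nil_eq]
  rfl

@[simp] theorem levenshtein_nil_cons_comm {α β δ : Type*} [AddCommMonoid δ] [Min δ]
    (C : Levenshtein.Cost α β δ) (y : β) (ys : List β) :
    levenshtein C ([] : List α) (y :: ys) = C.insert y + levenshtein C [] ys := by
  rw [levenshtein_nil_cons, add_comm]


private lemma lev_cons_le {C : Type*} [DecidableEq C] (x0 : C) (xs p : List C) :
    levenshtein Levenshtein.defaultCost (x0 :: xs) p ≤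
      1 + levenshtein Levenshtein.defaultCost xs p := by
  cases p with
  | nil => simp [Levenshtein.defaultCost]
  | cons b bs =>
      rw [levenshtein_cons_cons]
      exact min_le_left _ _

private lemma lev_insert_le {C : Type*} [DecidableEq C] (x : List C) (a : C) (p : List C) :
    levenshtein Levenshtein.defaultCost x (a :: p) ≤
      1 + levenshtein Levenshtein.defaultCost x p := by
  cases x with
  | nil => simp [Levenshtein.defaultCost]
  | cons x0 xs =>
      rw [levenshtein_cons_cons]
      exact le_trans (min_le_right _ _) (min_le_left _ _)

private lemma lev_subst_le {C : Type*} [DecidableEq C] (x0 : C) (xs : List C) (a : C)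
    (p : List C) :
    levenshtein Levenshtein.defaultCost (x0 :: xs) (a :: p) ≤
      Levenshtein.defaultCost.substitute x0 a + levenshtein Levenshtein.defaultCost xs p := by
  rw [levenshtein_cons_cons]
  exact le_trans (min_le_right _ _) (min_le_right _ _)

private lemma lev_append_key {C : Type*} [DecidableEq C] (c : C) :
    ∀ (x s : List C), ∃ p, p <+: s ∧
      levenshtein Levenshtein.defaultCost x p ≤
        levenshtein Levenshtein.defaultCost (x ++ [c]) s := by
  intro x
  induction x with
  | nil =>
      intro s
      exact ⟨[], List.nil_prefix, by simp⟩
  | cons x0 xs ihx =>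
      intro s
      induction s with
      | nil =>
          refine ⟨[], List.nil_prefix, ?_⟩
          obtain ⟨p, hp, hle⟩ := ihx []
          rw [List.prefix_nil] at hp
          subst hp
          calc levenshtein Levenshtein.defaultCost (x0 :: xs) []
              ≤ 1 + levenshtein Levenshtein.defaultCost xs [] := lev_cons_le _ _ _
            _ ≤ 1 + levenshtein Levenshtein.defaultCost (xs ++ [c]) [] := by
                exact Nat.add_le_add_left hle 1
            _ = levenshtein Levenshtein.defaultCost (x0 :: (xs ++ [c])) [] := by
                simp [Levenshtein.defaultCost]
      | cons a as ihs =>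
          simp only [List.cons_append] at ihs ⊢
          rw [levenshtein_cons_cons]
          have hdel : ∃ p, p <+: (a :: as) ∧
              levenshtein Levenshtein.defaultCost (x0 :: xs) p ≤
                Levenshtein.defaultCost.delete x0 +
                  levenshtein Levenshtein.defaultCost (xs ++ [c]) (a :: as) := by
            obtain ⟨p, hp, hle⟩ := ihx (a :: as)
            exact ⟨p, hp, le_trans (lev_cons_le _ _ _) (Nat.add_le_add_left hle 1)⟩
          have hins : ∃ p, p <+: (a :: as) ∧
              levenshtein Levenshtein.defaultCost (x0 :: xs) p ≤
                Levenshtein.defaultCost.insert a +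
                  levenshtein Levenshtein.defaultCost (x0 :: (xs ++ [c])) as := by
            obtain ⟨p, hp, hle⟩ := ihs
            exact ⟨a :: p, List.cons_prefix_cons.mpr ⟨rfl, hp⟩,
              le_trans (lev_insert_le _ _ _) (Nat.add_le_add_left hle 1)⟩
          have hsub : ∃ p, p <+: (a :: as) ∧
              levenshtein Levenshtein.defaultCost (x0 :: xs) p ≤
                Levenshtein.defaultCost.substitute x0 a +
                  levenshtein Levenshtein.defaultCost (xs ++ [c]) as := by
            obtain ⟨p, hp, hle⟩ := ihx as
            exact ⟨a :: p, List.cons_prefix_cons.mpr ⟨rfl, hp⟩,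
              le_trans (lev_subst_le _ _ _ _) (Nat.add_le_add_left hle _)⟩
          obtain ⟨p1, hp1, h1⟩ := hdel
          obtain ⟨p2, hp2, h2⟩ := hins
          obtain ⟨p3, hp3, h3⟩ := hsub
          rcases le_total (Levenshtein.defaultCost.delete x0 +
              levenshtein Levenshtein.defaultCost (xs ++ [c]) (a :: as))
              (min (Levenshtein.defaultCost.insert a +
                levenshtein Levenshtein.defaultCost (x0 :: (xs ++ [c])) as)
                (Levenshtein.defaultCost.substitute x0 a +
                  levenshtein Levenshtein.defaultCost (xs ++ [c]) as)) with h | h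
          · exact ⟨p1, hp1, by omega⟩
          · rcases le_total (Levenshtein.defaultCost.insert a +
                levenshtein Levenshtein.defaultCost (x0 :: (xs ++ [c])) as)
                (Levenshtein.defaultCost.substitute x0 a +
                  levenshtein Levenshtein.defaultCost (xs ++ [c]) as) with h2 | h2
            · exact ⟨p2, hp2, by omega⟩
            · exact ⟨p3, hp3, by omega⟩

/-- Monotonicity of the optimistic edit-distance loss (`δ_o ≥ 0`): with
`f y = min_{0 ≤ k ≤ |t|} ρ_levenshtein(y, t.take k)` (unit insertion,
deletion and substitution costs), appending a character cannot decrease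
the optimistic task loss: `f y ≤ f (y ++ [c])`. -/
theorem optimistic_loss_monotone {C : Type*} [DecidableEq C]
    (t y : List C) (c : C) :
    (Finset.range (t.length + 1)).inf' Finset.nonempty_range_add_one
        (fun k => levenshtein Levenshtein.defaultCost y (t.take k)) ≤
      (Finset.range (t.length + 1)).inf' Finset.nonempty_range_add_one
        (fun k => levenshtein Levenshtein.defaultCost (y ++ [c]) (t.take k)) := by
  apply Finset.le_inf'
  intro k hk
  obtain ⟨p, hp, hle⟩ := lev_append_key c y (t.take k)
  have hpt : p <+: t := hp.trans (List.take_prefix _ _)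
  have hlen : p.length ≤ t.length := hpt.length_le
  have hpe : p = t.take p.length := (List.prefix_iff_eq_take.mp hpt)
  calc (Finset.range (t.length + 1)).inf' Finset.nonempty_range_add_one
        (fun k => levenshtein Levenshtein.defaultCost y (t.take k))
      ≤ levenshtein Levenshtein.defaultCost y (t.take p.length) :=
        Finset.inf'_le _ (Finset.mem_range.mpr (Nat.lt_succ_of_le hlen))
    _ = levenshtein Levenshtein.defaultCost y p := by rw [← hpe]
    _ ≤ _ := hle
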